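/- Let F ∈ ℝ^{n×n} be invertible, φ : ℝ^m → ℝ^n, and h : ℝ^n × ℝ^m → ℝ^s with each component hₖ(·,u) convex in x for every u, and let Iₖ ⊆ {1,…,n} be such that hₖ(x,u) = hₖ(x',u) whenever xᵢ = x'ᵢ for all i ∈ Iₖ. Fix u ∈ ℝ^m. Then the following are equivalent: (i) there exists x ∈ ℝ^n with Fx + φ(u) = 0 and h(x,u) ≤ 0; (ii) there exist z^ℓ, z^u ∈ ℝ^n with z^ℓ ≤ −F^{−1}φ(u) ≤ z^u such that for every k ∈ {1,…,s} and every z ∈ ℝ^n with zᵢ ∈ {z^ℓᵢ, z^uᵢ} for all i ∈ Iₖ and zⱼ = z^ℓⱼ for j ∉ Iₖ, one has hₖ(z,u) ≤ 0. -/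

import Mathlib

open Matrix

private lemma box_convex_aux {n : ℕ} (f : (Fin n → ℝ) → ℝ)
    (hf : ConvexOn ℝ Set.univ f) (zl zu : Fin n → ℝ) (S : Finset (Fin n)) :
    ∀ x : Fin n → ℝ, (∀ i ∈ S, zl i ≤ x i ∧ x i ≤ zu i) →
    (∀ z, (∀ i ∈ S, z i = zl i ∨ z i = zu i) → (∀ j ∉ S, z j = x j) → f z ≤ 0) →
    f x ≤ 0 := by
  induction S using Finset.induction_on with
  | empty =>
    intro x _ H
    exact H x (by simp) (by simp)
  | insert a S hnotmem ih =>
    intro x hx H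
    have hxa := hx a (Finset.mem_insert_self a S)
    set xl := Function.update x a (zl a) with hxl
    set xu := Function.update x a (zu a) with hxu
    have hfl : f xl ≤ 0 := by
      apply ih xl
      · intro i hi
        have hia : i ≠ a := fun e => hnotmem (e ▸ hi)
        simp [hxl, Function.update_of_ne hia]
        exact hx i (Finset.mem_insert_of_mem hi)
      · intro z hz1 hz2
        apply H z
        · intro i hi
          rcases Finset.mem_insert.mp hi with rfl | hi
          · left
            have := hz2 i hnotmem
            simpa [hxl] using this
          · exact hz1 i hi
        · intro j hj
          have hja : j ≠ a := fun e => hj (e ▸ Finset.mem_insert_self a S)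
          have := hz2 j (fun e => hj (Finset.mem_insert_of_mem e))
          simpa [hxl, Function.update_of_ne hja] using this
    have hfu : f xu ≤ 0 := by
      apply ih xu
      · intro i hi
        have hia : i ≠ a := fun e => hnotmem (e ▸ hi)
        simp [hxu, Function.update_of_ne hia]
        exact hx i (Finset.mem_insert_of_mem hi)
      · intro z hz1 hz2
        apply H z
        · intro i hi
          rcases Finset.mem_insert.mp hi with rfl | hi
          · right
            have := hz2 i hnotmem
            simpa [hxu] using this
          · exact hz1 i hi
        · intro j hj
          have hja : j ≠ a := fun e => hj (e ▸ Finset.mem_insert_self a S)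
          have := hz2 j (fun e => hj (Finset.mem_insert_of_mem e))
          simpa [hxu, Function.update_of_ne hja] using this
    by_cases heq : zu a = zl a
    · have : x = xl := by
        funext i
        by_cases hia : i = a
        · subst hia
          simp [hxl]
          linarith [hxa.1, hxa.2]
        · simp [hxl, Function.update_of_ne hia]
      rw [this]; exact hfl
    · have hlt : zl a < zu a := lt_of_le_of_ne (le_trans hxa.1 hxa.2) (Ne.symm heq)
      set t : ℝ := (zu a - x a) / (zu a - zl a) with ht
      have hden : (0:ℝ) < zu a - zl a := by linarith
      have ht0 : 0 ≤ t := div_nonneg (by linarith [hxa.2]) (le_of_lt hden)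
      have ht1 : t ≤ 1 := by
        rw [ht, div_le_one hden]; linarith [hxa.1]
      have hne : zu a - zl a ≠ 0 := ne_of_gt hden
      have key : t * zl a + (1 - t) * zu a = x a := by
        rw [ht]; field_simp; ring
      have hcomb : x = t • xl + (1 - t) • xu := by
        funext i
        by_cases hia : i = a
        · subst hia
          simp only [Pi.add_apply, Pi.smul_apply, smul_eq_mul, hxl, hxu,
            Function.update_self]
          linarith [key]
        · simp only [Pi.add_apply, Pi.smul_apply, smul_eq_mul, hxl, hxu,
            Function.update_of_ne hia]
          ring
      have := hf.2 (Set.mem_univ xl) (Set.mem_univ xu) ht0 (show (0:ℝ) ≤ 1 - t by linarith) (by ring)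
      rw [hcomb]
      calc f (t • xl + (1 - t) • xu) ≤ t * f xl + (1 - t) * f xu := this
        _ ≤ 0 := by nlinarith

theorem convex_restriction_equivalence {n m s : ℕ}
    (F : Matrix (Fin n) (Fin n) ℝ) (hF : IsUnit F.det)
    (φ : (Fin m → ℝ) → (Fin n → ℝ))
    (h : (Fin n → ℝ) → (Fin m → ℝ) → (Fin s → ℝ))
    (hconv : ∀ k u, ConvexOn ℝ Set.univ (fun x => h x u k))
    (I : Fin s → Set (Fin n))
    (hsp : ∀ k u, ∀ x x' : Fin n → ℝ, (∀ i ∈ I k, x i = x' i) → h x u k = h x' u k)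
    (u : Fin m → ℝ) :
    (∃ x, F.mulVec x + φ u = 0 ∧ h x u ≤ 0) ↔
    (∃ zl zu : Fin n → ℝ,
      (zl ≤ -(F⁻¹.mulVec (φ u)) ∧ -(F⁻¹.mulVec (φ u)) ≤ zu) ∧
      ∀ k, ∀ z : Fin n → ℝ,
        ((∀ i ∈ I k, z i = zl i ∨ z i = zu i) ∧ ∀ j ∉ I k, z j = zl j) →
        h z u k ≤ 0) := by
  classical
  set x0 : Fin n → ℝ := -(F⁻¹.mulVec (φ u)) with hx0
  have hFx0 : F.mulVec x0 + φ u = 0 := by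
    rw [hx0, Matrix.mulVec_neg, Matrix.mulVec_mulVec, Matrix.mul_nonsing_inv F hF,
      Matrix.one_mulVec]
    simp
  constructor
  · rintro ⟨x, hxeq, hxle⟩
    have hxx0 : x = x0 := by
      have h1 : F.mulVec x = -(φ u) := by
        have := hxeq
        funext i
        have := congrFun hxeq i
        simp at this ⊢
        linarith
      have : F⁻¹.mulVec (F.mulVec x) = F⁻¹.mulVec (-(φ u)) := by rw [h1]
      rwa [Matrix.mulVec_mulVec, Matrix.nonsing_inv_mul F hF, Matrix.one_mulVec,
        Matrix.mulVec_neg] at this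
    subst hxx0
    refine ⟨x0, x0, ⟨le_refl _, le_refl _⟩, ?_⟩
    intro k z ⟨hz1, hz2⟩
    have hzx : z = x0 := by
      funext i
      by_cases hi : i ∈ I k
      · rcases hz1 i hi with e | e <;> exact e
      · exact hz2 i hi
    rw [hzx]
    exact hxle k
  · rintro ⟨zl, zu, ⟨hzl, hzu⟩, H⟩
    refine ⟨x0, hFx0, ?_⟩
    intro k
    set x' : Fin n → ℝ := fun j => if j ∈ I k then x0 j else zl j with hx'
    have hEq : h x0 u k = h x' u k := by
      apply hsp
      intro i hi
      simp [hx', hi]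
    show h x0 u k ≤ 0
    rw [hEq]
    apply box_convex_aux (fun x => h x u k) (hconv k u) zl zu
      (Finset.univ.filter (· ∈ I k)) x'
    · intro i hi
      simp only [Finset.mem_filter] at hi
      constructor
      · simp [hx', hi.2]; exact hzl i
      · simp [hx', hi.2]; exact hzu i
    · intro z hz1 hz2
      apply H k z
      constructor
      · intro i hi
        exact hz1 i (by simp [hi])
      · intro j hj
        have := hz2 j (by simp [hj])
        simpa [hx', hj] using this
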